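/- Assume positive monotonicity: M1(ω) ≥ M0(ω) for every ω ∈ Ω. For every y ∈ {0,1} and m ∈ {0,1}: if P(Y=1−y, M=m | X=1−m) > P(Y=1−y, M=m | X=m), then the event {ω ∈ Ω : Y1(ω) = y·m+(1−m)·(1−y), Y0(ω) = (1−y)·m+(1−m)·y, M1(ω)=m, M0(ω)=m} has positive μ-measure (in particular it is nonempty). -/

import Mathlib

open MeasureTheory ProbabilityTheory

/-- Conditional probability `P(A | B) = mu(A ∩ B) / mu(B)` as a real number. -/
noncomputable def condP {Ω : Type*} [MeasurableSpace Ω] (μ : Measure Ω)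
    (A B : Set Ω) : ℝ :=
  (μ (A ∩ B)).toReal / (μ B).toReal

lemma split_lemma {Ω : Type*} [MeasurableSpace Ω] (μ : Measure Ω) (A B C : Set Ω)
    (hsub : B ⊆ C ∪ A) (hlt : μ C < μ B) : 0 < μ A ∧ A.Nonempty := by
  have h1 : μ B ≤ μ C + μ A := le_trans (measure_mono hsub) (measure_union_le C A)
  have hA : 0 < μ A := by
    by_contra h
    push_neg at h
    have h0 : μ A = 0 := le_antisymm h zero_le
    rw [h0, add_zero] at h1
    exact absurd h1 (not_le.mpr hlt)
  refine ⟨hA, ?_⟩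
  by_contra h
  rw [Set.not_nonempty_iff_eq_empty] at h
  simp [h] at hA

theorem statement5
    {Ω : Type*} [MeasurableSpace Ω] (μ : Measure Ω) [IsProbabilityMeasure μ]
    (Y1 Y0 M1 M0 X Y M : Ω → ℕ)
    (hY1meas : Measurable Y1) (hY0meas : Measurable Y0)
    (hM1meas : Measurable M1) (hM0meas : Measurable M0)
    (hXmeas : Measurable X)
    (hY1bin : ∀ ω, Y1 ω ≤ 1) (hY0bin : ∀ ω, Y0 ω ≤ 1)
    (hM1bin : ∀ ω, M1 ω ≤ 1) (hM0bin : ∀ ω, M0 ω ≤ 1)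
    (hXbin : ∀ ω, X ω ≤ 1)
    (hXpos : 0 < μ {ω | X ω = 1}) (hXlt : μ {ω | X ω = 1} < 1)
    (hindep : IndepFun X (fun ω => (Y1 ω, Y0 ω, M1 ω, M0 ω)) μ)
    (hYcons1 : ∀ ω, X ω = 1 → Y ω = Y1 ω)
    (hYcons0 : ∀ ω, X ω = 0 → Y ω = Y0 ω)
    (hMcons1 : ∀ ω, X ω = 1 → M ω = M1 ω)
    (hMcons0 : ∀ ω, X ω = 0 → M ω = M0 ω)
    (hmono : ∀ ω, M0 ω ≤ M1 ω)
    (y m : ℕ) (hy : y ≤ 1) (hm : m ≤ 1)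
    (hemp : condP μ {ω | Y ω = 1 - y ∧ M ω = m} {ω | X ω = 1 - m}
        > condP μ {ω | Y ω = 1 - y ∧ M ω = m} {ω | X ω = m}) :
    0 < μ {ω | Y1 ω = y * m + (1 - m) * (1 - y) ∧ Y0 ω = (1 - y) * m + (1 - m) * y ∧
          M1 ω = m ∧ M0 ω = m} ∧
      {ω | Y1 ω = y * m + (1 - m) * (1 - y) ∧ Y0 ω = (1 - y) * m + (1 - m) * y ∧
          M1 ω = m ∧ M0 ω = m}.Nonempty := by
  have hX1meas : MeasurableSet {ω | X ω = 1} := hXmeas (measurableSet_singleton 1)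
  have hX0 : {ω | X ω = 0} = {ω | X ω = 1}ᶜ := by
    ext ω; simp only [Set.mem_setOf_eq, Set.mem_compl_iff]
    have := hXbin ω; omega
  have hX0pos : 0 < μ {ω | X ω = 0} := by
    rw [hX0, measure_compl hX1meas (measure_ne_top μ _), measure_univ]
    exact tsub_pos_of_lt hXlt
  have hX1r : (μ {ω | X ω = 1}).toReal ≠ 0 :=
    ne_of_gt (ENNReal.toReal_pos hXpos.ne' (measure_ne_top μ _))
  have hX0r : (μ {ω | X ω = 0}).toReal ≠ 0 :=
    ne_of_gt (ENNReal.toReal_pos hX0pos.ne' (measure_ne_top μ _))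
  -- independence facts
  have hind1 : ∀ a b : ℕ, μ ({ω | Y1 ω = a ∧ M1 ω = b} ∩ {ω | X ω = 1})
      = μ {ω | Y1 ω = a ∧ M1 ω = b} * μ {ω | X ω = 1} := by
    intro a b
    have h := hindep.measure_inter_preimage_eq_mul {1}
      (({a} : Set ℕ) ×ˢ ((Set.univ : Set ℕ) ×ˢ (({b} : Set ℕ) ×ˢ (Set.univ : Set ℕ))))
      (measurableSet_singleton 1)
      ((measurableSet_singleton a).prod (MeasurableSet.univ.prod
        ((measurableSet_singleton b).prod MeasurableSet.univ)))
    have e1 : X ⁻¹' {1} = {ω | X ω = 1} := rfl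
    have e2 : (fun ω => (Y1 ω, Y0 ω, M1 ω, M0 ω)) ⁻¹'
        (({a} : Set ℕ) ×ˢ ((Set.univ : Set ℕ) ×ˢ (({b} : Set ℕ) ×ˢ (Set.univ : Set ℕ))))
        = {ω | Y1 ω = a ∧ M1 ω = b} := by
      ext ω; simp [Set.mem_prod]
    rw [e1, e2] at h
    rw [Set.inter_comm, h, mul_comm]
  have hind0 : ∀ a b : ℕ, μ ({ω | Y0 ω = a ∧ M0 ω = b} ∩ {ω | X ω = 0})
      = μ {ω | Y0 ω = a ∧ M0 ω = b} * μ {ω | X ω = 0} := by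
    intro a b
    have h := hindep.measure_inter_preimage_eq_mul {0}
      ((Set.univ : Set ℕ) ×ˢ (({a} : Set ℕ) ×ˢ ((Set.univ : Set ℕ) ×ˢ ({b} : Set ℕ))))
      (measurableSet_singleton 0)
      (MeasurableSet.univ.prod ((measurableSet_singleton a).prod
        (MeasurableSet.univ.prod (measurableSet_singleton b))))
    have e1 : X ⁻¹' {0} = {ω | X ω = 0} := rfl
    have e2 : (fun ω => (Y1 ω, Y0 ω, M1 ω, M0 ω)) ⁻¹'
        ((Set.univ : Set ℕ) ×ˢ (({a} : Set ℕ) ×ˢ ((Set.univ : Set ℕ) ×ˢ ({b} : Set ℕ))))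
        = {ω | Y0 ω = a ∧ M0 ω = b} := by
      ext ω; simp [Set.mem_prod]
    rw [e1, e2] at h
    rw [Set.inter_comm, h, mul_comm]
  have hc1 : ∀ a b : ℕ, condP μ {ω | Y ω = a ∧ M ω = b} {ω | X ω = 1}
      = (μ {ω | Y1 ω = a ∧ M1 ω = b}).toReal := by
    intro a b
    have hset : {ω | Y ω = a ∧ M ω = b} ∩ {ω | X ω = 1}
        = {ω | Y1 ω = a ∧ M1 ω = b} ∩ {ω | X ω = 1} := by
      ext ω
      simp only [Set.mem_inter_iff, Set.mem_setOf_eq]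
      constructor
      · rintro ⟨⟨h1, h2⟩, hx⟩
        exact ⟨⟨by rw [← hYcons1 ω hx]; exact h1, by rw [← hMcons1 ω hx]; exact h2⟩, hx⟩
      · rintro ⟨⟨h1, h2⟩, hx⟩
        exact ⟨⟨by rw [hYcons1 ω hx]; exact h1, by rw [hMcons1 ω hx]; exact h2⟩, hx⟩
    unfold condP
    rw [hset, hind1 a b, ENNReal.toReal_mul, mul_div_assoc, div_self hX1r, mul_one]
  have hc0 : ∀ a b : ℕ, condP μ {ω | Y ω = a ∧ M ω = b} {ω | X ω = 0}
      = (μ {ω | Y0 ω = a ∧ M0 ω = b}).toReal := by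
    intro a b
    have hset : {ω | Y ω = a ∧ M ω = b} ∩ {ω | X ω = 0}
        = {ω | Y0 ω = a ∧ M0 ω = b} ∩ {ω | X ω = 0} := by
      ext ω
      simp only [Set.mem_inter_iff, Set.mem_setOf_eq]
      constructor
      · rintro ⟨⟨h1, h2⟩, hx⟩
        exact ⟨⟨by rw [← hYcons0 ω hx]; exact h1, by rw [← hMcons0 ω hx]; exact h2⟩, hx⟩
      · rintro ⟨⟨h1, h2⟩, hx⟩
        exact ⟨⟨by rw [hYcons0 ω hx]; exact h1, by rw [hMcons0 ω hx]; exact h2⟩, hx⟩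
    unfold condP
    rw [hset, hind0 a b, ENNReal.toReal_mul, mul_div_assoc, div_self hX0r, mul_one]
  interval_cases y <;> interval_cases m <;> norm_num at hemp ⊢
  · -- y = 0, m = 0 : μ{Y1=1 ∧ M1=0} > μ{Y0=1 ∧ M0=0}
    rw [hc1 1 0, hc0 1 0] at hemp
    have hlt := (ENNReal.toReal_lt_toReal (measure_ne_top μ _) (measure_ne_top μ _)).mp hemp
    refine split_lemma μ _ {ω | Y1 ω = 1 ∧ M1 ω = 0} {ω | Y0 ω = 1 ∧ M0 ω = 0} ?_ hlt
    intro ω hω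
    simp only [Set.mem_setOf_eq, Set.mem_union] at hω ⊢
    have := hY0bin ω; have := hM0bin ω; have := hmono ω
    omega
  · -- y = 0, m = 1 : μ{Y0=1 ∧ M0=1} > μ{Y1=1 ∧ M1=1}
    rw [hc1 1 1, hc0 1 1] at hemp
    have hlt := (ENNReal.toReal_lt_toReal (measure_ne_top μ _) (measure_ne_top μ _)).mp hemp
    refine split_lemma μ _ {ω | Y0 ω = 1 ∧ M0 ω = 1} {ω | Y1 ω = 1 ∧ M1 ω = 1} ?_ hlt
    intro ω hω
    simp only [Set.mem_setOf_eq, Set.mem_union] at hω ⊢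
    have := hY1bin ω; have := hM1bin ω; have := hmono ω
    omega
  · -- y = 1, m = 0 : μ{Y1=0 ∧ M1=0} > μ{Y0=0 ∧ M0=0}
    rw [hc1 0 0, hc0 0 0] at hemp
    have hlt := (ENNReal.toReal_lt_toReal (measure_ne_top μ _) (measure_ne_top μ _)).mp hemp
    refine split_lemma μ _ {ω | Y1 ω = 0 ∧ M1 ω = 0} {ω | Y0 ω = 0 ∧ M0 ω = 0} ?_ hlt
    intro ω hω
    simp only [Set.mem_setOf_eq, Set.mem_union] at hω ⊢
    have := hY0bin ω; have := hM0bin ω; have := hmono ω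
    omega
  · -- y = 1, m = 1 : μ{Y0=0 ∧ M0=1} > μ{Y1=0 ∧ M1=1}
    rw [hc1 0 1, hc0 0 1] at hemp
    have hlt := (ENNReal.toReal_lt_toReal (measure_ne_top μ _) (measure_ne_top μ _)).mp hemp
    refine split_lemma μ _ {ω | Y0 ω = 0 ∧ M0 ω = 1} {ω | Y1 ω = 0 ∧ M1 ω = 1} ?_ hlt
    intro ω hω
    simp only [Set.mem_setOf_eq, Set.mem_union] at hω ⊢
    have := hY1bin ω; have := hM1bin ω; have := hmono ω
    omega
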